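/- arXiv:1905.04935 — 2 statements merged into one kernel-verified Lean document; each statement's English description precedes it below -/
import Mathlib

section
/- Let (a_n)_{n∈ℕ} be a sequence of real numbers and C ≥ 0 a constant such that |a_{n+m} − a_n| ≤ C·m + C for all n, m ∈ ℕ. Fix an integer N ≥ 1 and suppose that A := limsup_{j→∞} a_{jN}/(jN) and a := liminf_{j→∞} a_{jN}/(jN) are finite real numbers. Then a ≤ liminf_{n→∞} a_n/n ≤ limsup_{n→∞} a_n/n ≤ A. -/
open Filter

/-- **Neighbour approximation lemma for real sequences.**
If `|a (n+m) - a n| ≤ C*m + C` for all `n m`, `N ≥ 1`, and the averaged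
subsequence `j ↦ a (j*N) / (j*N)` is bounded above and below (so that its
limsup `A` and liminf `a` are finite real numbers), then
`a ≤ liminf aₙ/n ≤ limsup aₙ/n ≤ A`. -/
theorem neighbour_approximation
    (a : ℕ → ℝ) (C : ℝ) (hC : 0 ≤ C)
    (hlip : ∀ n m : ℕ, |a (n + m) - a n| ≤ C * m + C)
    (N : ℕ) (hN : 1 ≤ N)
    (hbddAbove : IsBoundedUnder (· ≤ ·) atTop
      (fun j : ℕ => a (j * N) / ((j * N : ℕ) : ℝ)))
    (hbddBelow : IsBoundedUnder (· ≥ ·) atTop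
      (fun j : ℕ => a (j * N) / ((j * N : ℕ) : ℝ))) :
    liminf (fun j : ℕ => a (j * N) / ((j * N : ℕ) : ℝ)) atTop
        ≤ liminf (fun n : ℕ => a n / (n : ℝ)) atTop ∧
      liminf (fun n : ℕ => a n / (n : ℝ)) atTop
        ≤ limsup (fun n : ℕ => a n / (n : ℝ)) atTop ∧
      limsup (fun n : ℕ => a n / (n : ℝ)) atTop
        ≤ limsup (fun j : ℕ => a (j * N) / ((j * N : ℕ) : ℝ)) atTop := by
  set g : ℕ → ℝ := fun j : ℕ => a (j * N) / ((j * N : ℕ) : ℝ) with hg_def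
  set f : ℕ → ℝ := fun n : ℕ => a n / (n : ℝ) with hf_def
  -- a priori bound on |a m|
  have habs : ∀ m : ℕ, |a m| ≤ |a 0| + (C * m + C) := by
    intro m
    have h := hlip 0 m
    rw [Nat.zero_add] at h
    have := abs_sub_abs_le_abs_sub (a m) (a 0)
    linarith
  -- eventual boundedness of f
  have hfbound : ∀ n : ℕ, 1 ≤ n → |f n| ≤ |a 0| + 2 * C := by
    intro n hn
    have hn1 : (1 : ℝ) ≤ (n : ℝ) := by exact_mod_cast hn
    have hn0 : (0 : ℝ) < (n : ℝ) := by linarith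
    have h1 : |f n| = |a n| / n := by
      simp [hf_def, abs_div, abs_of_pos hn0]
    rw [h1, div_le_iff₀ hn0]
    have := habs n
    have h0 : 0 ≤ |a 0| := abs_nonneg _
    nlinarith
  have hfub : ∀ᶠ n : ℕ in atTop, f n ≤ |a 0| + 2 * C := by
    filter_upwards [eventually_ge_atTop 1] with n hn
    exact le_trans (le_abs_self _) (hfbound n hn)
  have hflb : ∀ᶠ n : ℕ in atTop, -(|a 0| + 2 * C) ≤ f n := by
    filter_upwards [eventually_ge_atTop 1] with n hn
    exact neg_le_of_abs_le (hfbound n hn)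
  have hfBddAbove : IsBoundedUnder (· ≤ ·) atTop f := ⟨|a 0| + 2 * C, by
    simpa [eventually_map] using hfub⟩
  have hfBddBelow : IsBoundedUnder (· ≥ ·) atTop f := ⟨-(|a 0| + 2 * C), by
    simpa [eventually_map] using hflb⟩
  set D : ℝ := C * N + C + (|a 0| + C) * N + C * N with hD_def
  -- the key estimate
  have key : ∀ n : ℕ, N ≤ n → |f n - g (n / N)| ≤ D / n := by
    intro n hn
    set j := n / N with hj_def
    set m := j * N with hm_def
    have hNpos : 0 < N := hN
    have hm_le : m ≤ n := Nat.div_mul_le_self n N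
    have hn_lt : n < m + N := Nat.lt_div_mul_add (a := n) hNpos
    have hj1 : 1 ≤ j := (Nat.one_le_div_iff hNpos).2 hn
    have hm1 : 1 ≤ m := le_trans hN (by
      calc N = 1 * N := (one_mul N).symm
      _ ≤ j * N := Nat.mul_le_mul_right N hj1)
    have hgm : g j = a m / (m : ℝ) := rfl
    set x : ℝ := (n : ℝ) with hx_def
    set y : ℝ := (m : ℝ) with hy_def
    have hy1 : (1 : ℝ) ≤ y := by rw [hy_def]; exact_mod_cast hm1
    have hx1 : (1 : ℝ) ≤ x := by
      have h1n : 1 ≤ n := le_trans hN hn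
      rw [hx_def]; exact_mod_cast h1n
    have hyx : y ≤ x := by rw [hx_def, hy_def]; exact_mod_cast hm_le
    have hxy : x < y + N := by rw [hx_def, hy_def]; exact_mod_cast hn_lt
    have hx0 : (0 : ℝ) < x := by linarith
    have hy0 : (0 : ℝ) < y := by linarith
    have hd : |a n - a m| ≤ C * N + C := by
      have h := hlip m (n - m)
      rw [Nat.add_sub_cancel' hm_le] at h
      have hcast : ((n - m : ℕ) : ℝ) ≤ (N : ℝ) := by
        have : n - m ≤ N := by omega
        exact_mod_cast this
      have : C * ((n - m : ℕ) : ℝ) ≤ C * N := mul_le_mul_of_nonneg_left hcast hC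
      linarith
    have ham : |a m| ≤ |a 0| + (C * y + C) := habs m
    have hident : f n - g j = (a n - a m) / x - a m * ((x - y) / (x * y)) := by
      show a n / x - a m / y = _
      field_simp
      ring
    rw [hident]
    have habs2 : |(a n - a m) / x - a m * ((x - y) / (x * y))|
        ≤ |a n - a m| / x + |a m| * ((x - y) / (x * y)) := by
      refine le_trans (abs_sub _ _) ?_
      have h1 : |(a n - a m) / x| = |a n - a m| / x := by
        rw [abs_div, abs_of_pos hx0]
      have h2 : |a m * ((x - y) / (x * y))| = |a m| * ((x - y) / (x * y)) := by
        rw [abs_mul]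
        congr 1
        rw [abs_of_nonneg]
        have : 0 ≤ x - y := by linarith
        positivity
      rw [h1, h2]
    refine le_trans habs2 ?_
    have hnum : |a n - a m| * y + |a m| * (x - y) ≤ D * y := by
      have e1 : |a n - a m| * y ≤ (C * N + C) * y :=
        mul_le_mul_of_nonneg_right hd hy0.le
      have e2 : |a m| * (x - y) ≤ (|a 0| + (C * y + C)) * N :=
        mul_le_mul ham (by linarith) (by linarith) (by positivity)
      have h0 : (0 : ℝ) ≤ (|a 0| + C) * N := by positivity
      nlinarith [mul_nonneg h0 (by linarith : (0:ℝ) ≤ y - 1)]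
    calc |a n - a m| / x + |a m| * ((x - y) / (x * y))
        = (|a n - a m| * y + |a m| * (x - y)) / (x * y) := by
          field_simp
      _ ≤ (D * y) / (x * y) := by gcongr
      _ = D / x := by
          rw [div_eq_div_iff (by positivity) (by positivity)]
          ring
  -- tendsto of D / n
  have hDtend : Tendsto (fun n : ℕ => D / (n : ℝ)) atTop (nhds 0) :=
    tendsto_const_div_atTop_nhds_zero_nat D
  have hdiv : Tendsto (fun n : ℕ => n / N) atTop atTop := by
    apply tendsto_atTop_atTop.2
    intro b
    exact ⟨b * N, fun n hn => (Nat.le_div_iff_mul_le hN).2 hn⟩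
  have hupper : ∀ b : ℝ, limsup g atTop < b → limsup f atTop ≤ b := by
    intro b hb
    set A := limsup g atTop with hA_def
    set b' := (A + b) / 2 with hb'_def
    have hAb' : A < b' := by simp only [hb'_def]; linarith
    have hgev : ∀ᶠ j in atTop, g j < b' := eventually_lt_of_limsup_lt hAb' hbddAbove
    have hgev2 : ∀ᶠ n in atTop, g (n / N) < b' := hdiv.eventually hgev
    have hDev : ∀ᶠ n : ℕ in atTop, D / (n : ℝ) < b - b' := by
      have hpos : (0 : ℝ) < b - b' := by simp only [hb'_def]; linarith
      exact hDtend.eventually (gt_mem_nhds hpos)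
    have hev : ∀ᶠ n in atTop, f n ≤ b := by
      filter_upwards [hgev2, hDev, eventually_ge_atTop N] with n h1 h2 h3
      have hk := key n h3
      have : f n - g (n / N) ≤ D / n := le_trans (le_abs_self _) hk
      linarith
    exact limsup_le_of_le hfBddBelow.isCoboundedUnder_le hev
  have hlower : ∀ b : ℝ, b < liminf g atTop → b ≤ liminf f atTop := by
    intro b hb
    set L := liminf g atTop with hL_def
    set b' := (b + L) / 2 with hb'_def
    have hb'L : b' < L := by simp only [hb'_def]; linarith
    have hgev : ∀ᶠ j in atTop, b' < g j := eventually_lt_of_lt_liminf hb'L hbddBelow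
    have hgev2 : ∀ᶠ n in atTop, b' < g (n / N) := hdiv.eventually hgev
    have hDev : ∀ᶠ n : ℕ in atTop, D / (n : ℝ) < b' - b := by
      have hpos : (0 : ℝ) < b' - b := by simp only [hb'_def]; linarith
      exact hDtend.eventually (gt_mem_nhds hpos)
    have hev : ∀ᶠ n in atTop, b ≤ f n := by
      filter_upwards [hgev2, hDev, eventually_ge_atTop N] with n h1 h2 h3
      have hk := key n h3
      have h4 := abs_le.mp hk
      linarith [h4.1]
    exact le_liminf_of_le hfBddAbove.isCoboundedUnder_ge hev
  refine ⟨?_, liminf_le_limsup hfBddAbove hfBddBelow, ?_⟩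
  · by_contra h
    push_neg at h
    have := hlower ((liminf f atTop + liminf g atTop) / 2) (by linarith)
    linarith
  · by_contra h
    push_neg at h
    have := hupper ((limsup g atTop + limsup f atTop) / 2) (by linarith)
    linarith
end

section
/- Let (Ω, 𝓕, P) be a probability space, C ≥ 0 a constant, and (f_n)_{n∈ℕ} a sequence of measurable real-valued functions on Ω such that for P-almost every ω one has |f_{n+m}(ω) − f_n(ω)| ≤ C·m + C for all n, m ∈ ℕ. Suppose that for every ε > 0 and every ζ > 0 there exist an integer N ≥ 1 and a measurable set E ⊆ Ω with P(E) ≥ 1 − ζ such that for every ω ∈ E the quantities limsup_{j→∞} f_{jN}(ω)/(jN) and liminf_{j→∞} f_{jN}(ω)/(jN) are finite and satisfy limsup_{j→∞} f_{jN}(ω)/(jN) − liminf_{j→∞} f_{jN}(ω)/(jN) ≤ ε. Then for P-almost every ω ∈ Ω the sequence (f_n(ω)/n)_{n≥1} converges. -/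
open Filter MeasureTheory ENNReal
open scoped ENNReal

/-- If `u - w → 0` and `w` is bounded (above and below) along `atTop`, then `u` is
bounded and its limsup/liminf are squeezed by those of `w`. -/
lemma aux_trans (u w : ℕ → ℝ)
    (hz : Tendsto (fun n => u n - w n) atTop (nhds 0))
    (hwa : IsBoundedUnder (· ≤ ·) atTop w) (hwb : IsBoundedUnder (· ≥ ·) atTop w) :
    IsBoundedUnder (· ≤ ·) atTop u ∧ IsBoundedUnder (· ≥ ·) atTop u ∧
      limsup u atTop ≤ limsup w atTop ∧ liminf w atTop ≤ liminf u atTop := by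
  have hsmall : ∀ δ : ℝ, 0 < δ → ∀ᶠ n in atTop, |u n - w n| < δ := by
    intro δ hδ
    have := hz.eventually (eventually_abs_sub_lt 0 hδ)
    simpa using this
  obtain ⟨b, hb⟩ := hwa
  obtain ⟨c, hc⟩ := hwb
  rw [eventually_map] at hb hc
  have hua : IsBoundedUnder (· ≤ ·) atTop u := by
    refine ⟨b + 1, eventually_map.2 ?_⟩
    filter_upwards [hsmall 1 one_pos, hb] with n h1 h2
    have := (abs_lt.1 h1).2
    linarith
  have hub : IsBoundedUnder (· ≥ ·) atTop u := by
    refine ⟨c - 1, eventually_map.2 ?_⟩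
    filter_upwards [hsmall 1 one_pos, hc] with n h1 h2
    have := (abs_lt.1 h1).1
    simp only [ge_iff_le] at h2 ⊢
    linarith
  refine ⟨hua, hub, ?_, ?_⟩
  · refine le_of_forall_sub_le fun δ hδ => ?_
    rw [sub_le_iff_le_add]
    refine limsup_le_of_le hub.isCoboundedUnder_le ?_
    have h1 : ∀ᶠ n in atTop, w n < limsup w atTop + δ / 2 :=
      eventually_lt_of_limsup_lt (lt_add_of_pos_right _ (by linarith)) ⟨b, eventually_map.2 hb⟩
    filter_upwards [h1, hsmall (δ / 2) (by linarith)] with n h2 h3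
    have := (abs_lt.1 h3).2
    linarith
  · refine le_of_forall_sub_le fun δ hδ => ?_
    refine le_liminf_of_le hua.isCoboundedUnder_ge ?_
    have h1 : ∀ᶠ n in atTop, liminf w atTop - δ / 2 < w n :=
      eventually_lt_of_lt_liminf (by linarith) ⟨c, eventually_map.2 hc⟩
    filter_upwards [h1, hsmall (δ / 2) (by linarith)] with n h2 h3
    have := (abs_lt.1 h3).1
    linarith

/-- Composing with a map tending to `atTop` keeps boundedness and squeezes
limsup/liminf. -/
lemma aux_comp (v : ℕ → ℝ) (q : ℕ → ℕ) (hq : Tendsto q atTop atTop)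
    (hva : IsBoundedUnder (· ≤ ·) atTop v) (hvb : IsBoundedUnder (· ≥ ·) atTop v) :
    IsBoundedUnder (· ≤ ·) atTop (fun n => v (q n)) ∧
      IsBoundedUnder (· ≥ ·) atTop (fun n => v (q n)) ∧
      limsup (fun n => v (q n)) atTop ≤ limsup v atTop ∧
      liminf v atTop ≤ liminf (fun n => v (q n)) atTop := by
  obtain ⟨b, hb⟩ := hva
  obtain ⟨c, hc⟩ := hvb
  rw [eventually_map] at hb hc
  have hwa : IsBoundedUnder (· ≤ ·) atTop (fun n => v (q n)) :=
    ⟨b, eventually_map.2 (hq.eventually hb)⟩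
  have hwb : IsBoundedUnder (· ≥ ·) atTop (fun n => v (q n)) :=
    ⟨c, eventually_map.2 (hq.eventually hc)⟩
  refine ⟨hwa, hwb, ?_, ?_⟩
  · refine le_of_forall_sub_le fun δ hδ => ?_
    rw [sub_le_iff_le_add]
    refine limsup_le_of_le hwb.isCoboundedUnder_le ?_
    have h1 : ∀ᶠ k in atTop, v k < limsup v atTop + δ :=
      eventually_lt_of_limsup_lt (lt_add_of_pos_right _ hδ) ⟨b, eventually_map.2 hb⟩
    exact (hq.eventually h1).mono fun n hn => hn.le
  · refine le_of_forall_sub_le fun δ hδ => ?_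
    refine le_liminf_of_le hwa.isCoboundedUnder_ge ?_
    have h1 : ∀ᶠ k in atTop, liminf v atTop - δ < v k :=
      eventually_lt_of_lt_liminf (by linarith) ⟨c, eventually_map.2 hc⟩
    exact (hq.eventually h1).mono fun n hn => hn.le

/-- Almost-Lipschitz increments imply that the normalized sequence is asymptotically
equal to its sped-up subsequence. -/
lemma aux_key (C : ℝ) (hC : 0 ≤ C) (g : ℕ → ℝ)
    (hlip : ∀ n m : ℕ, |g (n + m) - g n| ≤ C * m + C)
    (N : ℕ) (hN : 1 ≤ N) :
    Tendsto (fun n : ℕ => g n / n - g (n / N * N) / ((n / N * N : ℕ) : ℝ)) atTop (nhds 0) := by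
  have hN0 : 0 < N := hN
  set K : ℝ := C * N + C + (|g 0| + C) * N + C * N with hK
  refine squeeze_zero_norm' ?_ (tendsto_const_div_atTop_nhds_zero_nat K)
  filter_upwards [eventually_ge_atTop N] with n hn
  set j := n / N with hjdef
  set m := j * N with hmdef
  have hj1 : 1 ≤ j := (Nat.one_le_div_iff hN0).2 hn
  have hm1 : 1 ≤ m := le_trans (by norm_num) (Nat.mul_le_mul hj1 hN)
  have hmn : m ≤ n := Nat.div_mul_le_self n N
  have hnm : n - m ≤ N := by
    have hmod : n % N < N := Nat.mod_lt n hN0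
    have heq : m + n % N = n := by rw [hmdef, hjdef, Nat.mul_comm]; exact Nat.div_add_mod n N
    omega
  have hy1 : (1 : ℝ) ≤ (m : ℝ) := by exact_mod_cast hm1
  have hyx : (m : ℝ) ≤ (n : ℝ) := by exact_mod_cast hmn
  have hx0 : (0 : ℝ) < (n : ℝ) := by linarith
  have hy0 : (0 : ℝ) < (m : ℝ) := by linarith
  have hxy : (n : ℝ) - (m : ℝ) ≤ (N : ℝ) := by
    have : ((n - m : ℕ) : ℝ) ≤ (N : ℝ) := by exact_mod_cast hnm
    rwa [Nat.cast_sub hmn] at this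
  have h1 : |g n - g m| ≤ C * N + C := by
    have h := hlip m (n - m)
    rw [Nat.add_sub_cancel' hmn] at h
    have h2 : C * ((n - m : ℕ) : ℝ) ≤ C * (N : ℝ) :=
      mul_le_mul_of_nonneg_left (by exact_mod_cast hnm) hC
    linarith
  have h2 : |g m| ≤ |g 0| + (C * (m : ℝ) + C) := by
    have h := hlip 0 m
    simp only [Nat.zero_add] at h
    have h3 : |g m| ≤ |g m - g 0| + |g 0| := by
      have := abs_add_le (g m - g 0) (g 0)
      simpa using this
    linarith
  have hNr : (0 : ℝ) ≤ (N : ℝ) := Nat.cast_nonneg N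
  have heq2 : g n / (n : ℝ) - g m / (m : ℝ) = (g n * m - g m * n) / ((n : ℝ) * m) := by
    field_simp
  have hnum : |g n * (m : ℝ) - g m * (n : ℝ)| ≤ K * (m : ℝ) := by
    have e : g n * (m : ℝ) - g m * (n : ℝ)
        = (g n - g m) * (m : ℝ) - g m * ((n : ℝ) - (m : ℝ)) := by ring
    have hb1 : |(g n - g m) * (m : ℝ)| ≤ (C * N + C) * (m : ℝ) := by
      rw [abs_mul, abs_of_pos hy0]
      exact mul_le_mul_of_nonneg_right h1 hy0.le
    have hb2 : |g m * ((n : ℝ) - (m : ℝ))| ≤ (|g 0| + (C * (m : ℝ) + C)) * (N : ℝ) := by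
      rw [abs_mul, abs_of_nonneg (by linarith : (0 : ℝ) ≤ (n : ℝ) - (m : ℝ))]
      exact mul_le_mul h2 hxy (by linarith) (by positivity)
    calc |g n * (m : ℝ) - g m * (n : ℝ)|
        = |(g n - g m) * (m : ℝ) - g m * ((n : ℝ) - (m : ℝ))| := by rw [e]
      _ ≤ |(g n - g m) * (m : ℝ)| + |g m * ((n : ℝ) - (m : ℝ))| := abs_sub _ _
      _ ≤ (C * N + C) * (m : ℝ) + (|g 0| + (C * (m : ℝ) + C)) * (N : ℝ) := by linarith
      _ ≤ K * (m : ℝ) := by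
          rw [hK]
          nlinarith [abs_nonneg (g 0), mul_nonneg hC hNr,
            mul_nonneg (mul_nonneg hC hNr) (by linarith : (0:ℝ) ≤ (m:ℝ) - 1),
            mul_nonneg (add_nonneg (abs_nonneg (g 0)) hC)
              (mul_nonneg hNr (by linarith : (0:ℝ) ≤ (m:ℝ) - 1))]
  have hfinal : |g n / (n : ℝ) - g m / (m : ℝ)| ≤ K / (n : ℝ) := by
    rw [heq2, abs_div, abs_of_pos (mul_pos hx0 hy0)]
    calc |g n * (m : ℝ) - g m * (n : ℝ)| / ((n : ℝ) * m)
        ≤ K * (m : ℝ) / ((n : ℝ) * m) := by gcongr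
      _ = K / (n : ℝ) := by
          rw [mul_comm (n : ℝ) (m : ℝ), ← div_div, mul_div_assoc, div_self hy0.ne', mul_one]
  simpa [Real.norm_eq_abs] using hfinal

/-- The per-`ω`, per-`k` step: subsequence control transfers to the whole sequence. -/
lemma aux_main (C : ℝ) (hC : 0 ≤ C) (g : ℕ → ℝ)
    (hlip : ∀ n m : ℕ, |g (n + m) - g n| ≤ C * m + C)
    (N : ℕ) (hN : 1 ≤ N) (ε : ℝ)
    (hva : IsBoundedUnder (· ≤ ·) atTop (fun j : ℕ => g (j * N) / ((j * N : ℕ) : ℝ)))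
    (hvb : IsBoundedUnder (· ≥ ·) atTop (fun j : ℕ => g (j * N) / ((j * N : ℕ) : ℝ)))
    (hε : limsup (fun j : ℕ => g (j * N) / ((j * N : ℕ) : ℝ)) atTop -
      liminf (fun j : ℕ => g (j * N) / ((j * N : ℕ) : ℝ)) atTop ≤ ε) :
    IsBoundedUnder (· ≤ ·) atTop (fun n : ℕ => g n / n) ∧
    IsBoundedUnder (· ≥ ·) atTop (fun n : ℕ => g n / n) ∧
    limsup (fun n : ℕ => g n / n) atTop - liminf (fun n : ℕ => g n / n) atTop ≤ ε := by
  set v : ℕ → ℝ := fun j : ℕ => g (j * N) / ((j * N : ℕ) : ℝ) with hv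
  set q : ℕ → ℕ := fun n : ℕ => n / N with hqdef
  have hq : Tendsto q atTop atTop := by
    refine tendsto_atTop_atTop.2 fun b => ⟨b * N, fun n hn => ?_⟩
    exact (Nat.le_div_iff_mul_le hN).2 hn
  obtain ⟨hwa, hwb, hw1, hw2⟩ := aux_comp v q hq hva hvb
  have hz : Tendsto (fun n : ℕ => (fun n : ℕ => g n / n) n - (fun n => v (q n)) n)
      atTop (nhds 0) := aux_key C hC g hlip N hN
  obtain ⟨hua, hub, hu1, hu2⟩ := aux_trans (fun n : ℕ => g n / n) (fun n => v (q n)) hz hwa hwb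
  exact ⟨hua, hub, by linarith⟩

/-- Probabilistic skeleton of the law of large numbers for volumes of
quasi-fuchsian manifolds: if `P`-almost surely `|f_{n+m}(ω) - f_n(ω)| ≤ C*m + C`,
and for all `ε, ζ > 0` there are `N ≥ 1` and a measurable set `E` with
`P(E) ≥ 1 - ζ` on which the averaged subsequence `j ↦ f_{jN}(ω)/(jN)` is
bounded above and below (so its limsup and liminf are finite) with
`limsup - liminf ≤ ε`, then `(fₙ(ω)/n)` converges for `P`-almost every `ω`. -/
theorem ae_convergence_of_normalized_sequence
    {Ω : Type*} [MeasurableSpace Ω] (P : Measure Ω) [IsProbabilityMeasure P]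
    (C : ℝ) (hC : 0 ≤ C)
    (f : ℕ → Ω → ℝ) (hmeas : ∀ n, Measurable (f n))
    (hlip : ∀ᵐ ω ∂P, ∀ n m : ℕ, |f (n + m) ω - f n ω| ≤ C * m + C)
    (h : ∀ ε : ℝ, 0 < ε → ∀ ζ : ℝ, 0 < ζ → ∃ N : ℕ, 1 ≤ N ∧ ∃ E : Set Ω,
      MeasurableSet E ∧ 1 - ENNReal.ofReal ζ ≤ P E ∧
      ∀ ω ∈ E,
        IsBoundedUnder (· ≤ ·) atTop
          (fun j : ℕ => f (j * N) ω / ((j * N : ℕ) : ℝ)) ∧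
        IsBoundedUnder (· ≥ ·) atTop
          (fun j : ℕ => f (j * N) ω / ((j * N : ℕ) : ℝ)) ∧
        limsup (fun j : ℕ => f (j * N) ω / ((j * N : ℕ) : ℝ)) atTop -
          liminf (fun j : ℕ => f (j * N) ω / ((j * N : ℕ) : ℝ)) atTop ≤ ε) :
    ∀ᵐ ω ∂P, ∃ L : ℝ, Tendsto (fun n : ℕ => f n ω / (n : ℝ)) atTop (nhds L) := by
  -- choose, for each k, data from the hypothesis with ε = 1/(k+1), ζ = (1/2)^k
  have H : ∀ k : ℕ, ∃ N : ℕ, 1 ≤ N ∧ ∃ E : Set Ω,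
      MeasurableSet E ∧ 1 - ENNReal.ofReal ((1/2 : ℝ) ^ k) ≤ P E ∧
      ∀ ω ∈ E,
        IsBoundedUnder (· ≤ ·) atTop (fun j : ℕ => f (j * N) ω / ((j * N : ℕ) : ℝ)) ∧
        IsBoundedUnder (· ≥ ·) atTop (fun j : ℕ => f (j * N) ω / ((j * N : ℕ) : ℝ)) ∧
        limsup (fun j : ℕ => f (j * N) ω / ((j * N : ℕ) : ℝ)) atTop -
          liminf (fun j : ℕ => f (j * N) ω / ((j * N : ℕ) : ℝ)) atTop ≤ 1 / ((k : ℝ) + 1) :=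
    fun k => h (1 / ((k : ℝ) + 1)) (by positivity) ((1/2 : ℝ) ^ k) (by positivity)
  choose N hN E hEmeas hEP hEprop using H
  -- Borel–Cantelli
  have hEc : ∀ k : ℕ, P (E k)ᶜ ≤ ENNReal.ofReal ((1/2 : ℝ) ^ k) := by
    intro k
    rw [prob_compl_eq_one_sub (hEmeas k)]
    rw [tsub_le_iff_right]
    calc (1 : ℝ≥0∞) ≤ 1 - ENNReal.ofReal ((1/2 : ℝ) ^ k) + ENNReal.ofReal ((1/2 : ℝ) ^ k) :=
          le_tsub_add
      _ ≤ P (E k) + ENNReal.ofReal ((1/2 : ℝ) ^ k) := by gcongr; exact hEP k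
      _ = ENNReal.ofReal ((1/2 : ℝ) ^ k) + P (E k) := add_comm _ _
  have hsum : (∑' k : ℕ, P (E k)ᶜ) ≠ ⊤ := by
    refine ne_top_of_le_ne_top ?_ (ENNReal.tsum_le_tsum hEc)
    have heq : ∀ k : ℕ, ENNReal.ofReal ((1/2 : ℝ) ^ k) = (ENNReal.ofReal (1/2)) ^ k := by
      intro k; rw [← ENNReal.ofReal_pow (by norm_num)]
    simp_rw [heq]
    rw [ENNReal.tsum_geometric]
    refine ENNReal.inv_ne_top.2 ?_
    have : ENNReal.ofReal (1/2) < 1 := ENNReal.ofReal_lt_one.2 (by norm_num)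
    exact (tsub_pos_of_lt this).ne'
  have hBC : P (limsup (fun k => (E k)ᶜ) atTop) = 0 :=
    measure_limsup_atTop_eq_zero hsum
  have hae : ∀ᵐ ω ∂P, ω ∉ limsup (fun k => (E k)ᶜ) atTop :=
    measure_eq_zero_iff_ae_notMem.1 hBC
  filter_upwards [hlip, hae] with ω hω1 hω2
  -- ω is in E k for all large k
  have hev : ∀ᶠ k in atTop, ω ∈ E k := by
    rw [mem_limsup_iff_frequently_mem, not_frequently] at hω2
    filter_upwards [hω2] with k hk
    simpa using hk
  obtain ⟨K, hK⟩ := eventually_atTop.1 hev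
  set u : ℕ → ℝ := fun n : ℕ => f n ω / n with hu
  have hmain : ∀ k, K ≤ k →
      IsBoundedUnder (· ≤ ·) atTop u ∧ IsBoundedUnder (· ≥ ·) atTop u ∧
      limsup u atTop - liminf u atTop ≤ 1 / ((k : ℝ) + 1) := by
    intro k hk
    obtain ⟨hva, hvb, hε⟩ := hEprop k ω (hK k hk)
    exact aux_main C hC (fun n => f n ω) hω1 (N k) (hN k) _ hva hvb hε
  obtain ⟨hua, hub, -⟩ := hmain K le_rfl
  have hle : limsup u atTop - liminf u atTop ≤ 0 := by
    refine ge_of_tendsto tendsto_one_div_add_atTop_nhds_zero_nat ?_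
    filter_upwards [eventually_ge_atTop K] with k hk
    exact (hmain k hk).2.2
  have heq : liminf u atTop = limsup u atTop :=
    le_antisymm (liminf_le_limsup hua hub) (by linarith)
  exact ⟨limsup u atTop, tendsto_of_liminf_eq_limsup heq rfl hua hub⟩
end
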